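/- arXiv:1805.10409 — 3 statements merged into one kernel-verified Lean document; each statement's English description precedes it below -/
import Mathlib

section
/- Let n, i, h, s be positive integers with s ≥ h, n−1 = Σ_{j=0}^{s−1} n_j·3^j with n_j ∈ {0,1,2}, and i < 3^{h−1}. Then k(n−1, 2·3^{h−1}+i) ≡ (−1)^{n_{h−1}} · k(n−1, i) (mod 3) and k(n−1, 3^{h−1}+i) ≡ (1−n_{h−1}) · k(n−1, i) (mod 3). -/
/-- The cardinality of the `n`-dimensional Lee ball of radius `e`. -/
def leeK (n e : ℕ) : ℕ := ∑ i ∈ Finset.range (min n e + 1), 2 ^ i * n.choose i * e.choose i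

open Finset

private instance f3 : Fact (Nat.Prime 3) := ⟨by norm_num⟩

/-- generalized Lucas at block 3^k -/
private lemma lucasPow (k : ℕ) : ∀ A B b r : ℕ, B < 3^k → r < 3^k →
    (((A * 3^k + B).choose (b * 3^k + r) : ZMod 3)) = (A.choose b : ZMod 3) * (B.choose r : ZMod 3) := by
  induction k with
  | zero =>
    intro A B b r hB hr
    interval_cases B
    interval_cases r
    simp
  | succ k ih =>
    intro A B b r hB hr
    have h1 : ((A * 3^(k+1) + B).choose (b * 3^(k+1) + r) : ZMod 3)
        = (((A * 3^(k+1) + B) % 3).choose ((b * 3^(k+1) + r) % 3) : ZMod 3)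
          * (((A * 3^(k+1) + B) / 3).choose ((b * 3^(k+1) + r) / 3) : ZMod 3) := by
      have := (ZMod.intCast_eq_intCast_iff _ _ 3).mpr
        (Choose.choose_modEq_choose_mod_mul_choose_div
          (n := A * 3^(k+1) + B) (k := b * 3^(k+1) + r) (p := 3))
      push_cast at this
      exact this
    have e1 : (A * 3^(k+1) + B) % 3 = B % 3 := by
      rw [pow_succ, ← mul_assoc, Nat.add_comm, Nat.add_mul_mod_self_right]
    have e2 : (A * 3^(k+1) + B) / 3 = A * 3^k + B / 3 := by
      rw [pow_succ, ← mul_assoc, Nat.add_comm, Nat.add_mul_div_right _ _ (by norm_num : 0 < 3),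
        Nat.add_comm]
    have e3 : (b * 3^(k+1) + r) % 3 = r % 3 := by
      rw [pow_succ, ← mul_assoc, Nat.add_comm, Nat.add_mul_mod_self_right]
    have e4 : (b * 3^(k+1) + r) / 3 = b * 3^k + r / 3 := by
      rw [pow_succ, ← mul_assoc, Nat.add_comm, Nat.add_mul_div_right _ _ (by norm_num : 0 < 3),
        Nat.add_comm]
    rw [e1, e2, e3, e4] at h1
    have hB3 : B / 3 < 3^k := Nat.div_lt_of_lt_mul (by rw [← pow_succ']; exact hB)
    have hr3 : r / 3 < 3^k := Nat.div_lt_of_lt_mul (by rw [← pow_succ']; exact hr)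
    rw [h1, ih A (B/3) b (r/3) hB3 hr3]
    have h2 : ((B.choose r : ℕ) : ZMod 3) = ((B % 3).choose (r % 3) : ZMod 3) * ((B / 3).choose (r / 3) : ZMod 3) := by
      have := (ZMod.intCast_eq_intCast_iff _ _ 3).mpr
        (Choose.choose_modEq_choose_mod_mul_choose_div (n := B) (k := r) (p := 3))
      push_cast at this
      exact this
    rw [h2]
    ring

/-- leeK cast to ZMod 3 as a full-range sum -/
private lemma leeK_cast (n e : ℕ) :
    (leeK n e : ZMod 3) = ∑ j ∈ range (e+1), (-1)^j * (n.choose j : ZMod 3) * (e.choose j : ZMod 3) := by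
  have hnat : leeK n e = ∑ j ∈ range (e+1), 2^j * n.choose j * e.choose j := by
    unfold leeK
    rcases le_or_gt e n with h | h
    · rw [min_eq_right h]
    · rw [min_eq_left h.le]
      apply Finset.sum_subset
      · exact Finset.range_subset_range.mpr (by omega)
      · intro j _ hj
        simp only [Finset.mem_range, not_lt] at hj
        rw [Nat.choose_eq_zero_of_lt (by omega : n < j)]
        ring
  rw [hnat]
  push_cast
  apply Finset.sum_congr rfl
  intro j _
  have : ((2 : ℕ) : ZMod 3) = -1 := by decide
  rw [show ((2:ZMod 3)) = -1 by decide]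

/-- rectangle reindex -/
private lemma sum_range_mul' {M : Type*} [AddCommMonoid M] (f : ℕ → M) (a q : ℕ) :
    ∑ j ∈ range (a * q), f j = ∑ b ∈ range a, ∑ r ∈ range q, f (b * q + r) := by
  induction a with
  | zero => simp
  | succ a ih =>
    rw [Nat.succ_mul, Finset.sum_range_add, ih, Finset.sum_range_succ]

private lemma leeK_key (k A B a i : ℕ) (hB : B < 3^k) (hi : i < 3^k) (ha : a < 3) :
    (leeK (A * 3^k + B) (a * 3^k + i) : ZMod 3) =
      (∑ b ∈ range (a+1), (-1)^b * (A.choose b : ZMod 3) * (a.choose b : ZMod 3))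
        * (leeK (A * 3^k + B) i : ZMod 3) := by
  have hq : 0 < 3^k := pow_pos (by norm_num) k
  have hodd : ((-1 : ZMod 3))^(3^k) = -1 := Odd.neg_one_pow (Odd.pow (by decide : Odd 3))
  rw [leeK_cast, leeK_cast]
  have hext : ∑ j ∈ range (a * 3^k + i + 1),
        (-1)^j * ((A * 3^k + B).choose j : ZMod 3) * ((a * 3^k + i).choose j : ZMod 3)
      = ∑ j ∈ range ((a+1) * 3^k),
        (-1)^j * ((A * 3^k + B).choose j : ZMod 3) * ((a * 3^k + i).choose j : ZMod 3) := by
    apply Finset.sum_subset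
    · apply Finset.range_subset_range.mpr
      have : (a+1) * 3^k = a * 3^k + 3^k := by ring
      omega
    · intro j _ hj
      simp only [Finset.mem_range, not_lt] at hj
      rw [Nat.choose_eq_zero_of_lt (by omega : a * 3^k + i < j)]
      push_cast
      ring
  rw [hext, sum_range_mul']
  have hterm : ∀ b ∈ range (a+1), ∀ r ∈ range (3^k),
      (-1)^(b * 3^k + r) * ((A * 3^k + B).choose (b * 3^k + r) : ZMod 3)
          * ((a * 3^k + i).choose (b * 3^k + r) : ZMod 3)
      = ((-1)^b * (A.choose b : ZMod 3) * (a.choose b : ZMod 3))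
          * ((-1)^r * (B.choose r : ZMod 3) * (i.choose r : ZMod 3)) := by
    intro b _ r hr
    rw [Finset.mem_range] at hr
    rw [lucasPow k A B b r hB hr, lucasPow k a i b r hi hr, pow_add, pow_mul', hodd]
    ring
  rw [Finset.sum_congr rfl fun b hb => Finset.sum_congr rfl fun r hr => hterm b hb r hr]
  rw [← Finset.sum_mul_sum]
  congr 1
  have hinner : ∀ j ∈ range (i+1),
      (-1)^j * ((A * 3^k + B).choose j : ZMod 3) * (i.choose j : ZMod 3)
      = (-1)^j * (B.choose j : ZMod 3) * (i.choose j : ZMod 3) := by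
    intro j hj
    rw [Finset.mem_range] at hj
    have := lucasPow k A B 0 j hB (by omega : j < 3^k)
    rw [zero_mul, zero_add] at this
    rw [this, Nat.choose_zero_right]
    push_cast
    ring
  rw [Finset.sum_congr rfl hinner]
  symm
  apply Finset.sum_subset
  · exact Finset.range_subset_range.mpr (by omega)
  · intro j _ hj
    simp only [Finset.mem_range, not_lt] at hj
    rw [Nat.choose_eq_zero_of_lt (by omega : i < j)]
    push_cast
    ring

private lemma geo3 (k : ℕ) : (∑ j ∈ range k, 2 * 3^j) + 1 = 3^k := by
  induction k with
  | zero => simp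
  | succ k ih => rw [Finset.sum_range_succ, pow_succ]; omega

private lemma digit_eq (s k : ℕ) (nd : ℕ → ℕ) (hnd : ∀ j < s, nd j < 3) (hk : k < s) :
    (∑ j ∈ range s, nd j * 3^j) / 3^k % 3 = nd k := by
  have hq : 0 < 3^k := pow_pos (by norm_num) k
  have hlo : (∑ j ∈ range k, nd j * 3^j) < 3^k := by
    have h1 : ∑ j ∈ range k, nd j * 3^j ≤ ∑ j ∈ range k, 2 * 3^j := by
      apply Finset.sum_le_sum
      intro j hj
      rw [Finset.mem_range] at hj
      exact Nat.mul_le_mul_right _ (by have := hnd j (by omega); omega)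
    have := geo3 k
    omega
  have hsplit : ∑ j ∈ range s, nd j * 3^j
      = (∑ j ∈ range k, nd j * 3^j)
        + 3^k * (nd k + 3 * ∑ j ∈ range (s - (k+1)), nd (k+1+j) * 3^j) := by
    have h2 : s = (k+1) + (s - (k+1)) := by omega
    rw [h2, Finset.sum_range_add, Finset.sum_range_succ]
    simp only [Nat.add_sub_cancel_left]
    have h3 : ∀ j, nd (k+1+j) * 3^(k+1+j) = (nd (k+1+j) * 3^j) * (3 * 3^k) := by
      intro j
      rw [pow_add, pow_succ]
      ring
    rw [Finset.sum_congr rfl fun j _ => h3 j, ← Finset.sum_mul]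
    ring
  rw [hsplit, Nat.add_mul_div_left _ _ hq, Nat.div_eq_of_lt hlo, Nat.zero_add,
    Nat.add_mul_mod_self_left, Nat.mod_eq_of_lt (hnd k hk)]

theorem leeK_shift_digit (n i h s : ℕ) (hn : 0 < n) (hi : 0 < i) (hh : 0 < h)
    (hs : h ≤ s) (nd : ℕ → ℕ) (hnd : ∀ j < s, nd j < 3)
    (hrep : n - 1 = ∑ j ∈ Finset.range s, nd j * 3 ^ j)
    (hilt : i < 3 ^ (h - 1)) :
    (leeK (n - 1) (2 * 3 ^ (h - 1) + i) : ℤ) ≡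
      (-1) ^ (nd (h - 1)) * leeK (n - 1) i [ZMOD 3] ∧
    (leeK (n - 1) (3 ^ (h - 1) + i) : ℤ) ≡
      (1 - (nd (h - 1) : ℤ)) * leeK (n - 1) i [ZMOD 3] := by
  set m := n - 1 with hm
  set k := h - 1 with hk
  have hks : k < s := by omega
  have hdig : m / 3^k % 3 = nd k := by
    rw [hrep]
    exact digit_eq s k nd hnd hks
  have hq : 0 < 3^k := pow_pos (by norm_num) k
  set A := m / 3^k with hA
  set B := m % 3^k with hB'
  have hmAB : m = A * 3^k + B := by
    rw [hA, hB', mul_comm]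
    exact (Nat.div_add_mod m (3^k)).symm
  have hB : B < 3^k := Nat.mod_lt _ hq
  have hCA : ∀ b < 3, ((A.choose b : ℕ) : ZMod 3) = (((nd k).choose b : ℕ) : ZMod 3) := by
    intro b hb
    have hA3 : A = (A / 3) * 3^1 + A % 3 := by omega
    have := lucasPow 1 (A / 3) (A % 3) 0 b (by omega) (by omega)
    rw [zero_mul, zero_add, Nat.choose_zero_right] at this
    rw [hA3, this, hdig]
    push_cast
    ring
  have hd3 : nd k < 3 := hnd k hks
  constructor
  · apply (ZMod.intCast_eq_intCast_iff _ _ 3).mp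
    push_cast
    rw [hmAB, leeK_key k A B 2 i hB hilt (by norm_num)]
    congr 1
    rw [Finset.sum_range_succ, Finset.sum_range_succ, Finset.sum_range_succ,
      hCA 0 (by norm_num), hCA 1 (by norm_num), hCA 2 (by norm_num)]
    interval_cases hd : nd k <;> simp <;> decide
  · apply (ZMod.intCast_eq_intCast_iff _ _ 3).mp
    push_cast
    rw [hmAB, show (3:ℕ)^k + i = 1 * 3^k + i by ring,
      leeK_key k A B 1 i hB hilt (by norm_num)]
    congr 1
    rw [Finset.sum_range_succ, Finset.sum_range_succ,
      hCA 0 (by norm_num), hCA 1 (by norm_num)]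
    interval_cases hd : nd k <;> simp <;> decide
end

section
/- Let e be a positive integer whose base-3 representation contains exactly one digit equal to 1, located in the units place (i.e., e ≡ 1 mod 3 and all other base-3 digits are 0 or 2). Then p(n,e) ≢ 0 (mod 3) for all positive integers n, where p(n,e) = Σ_{i=0}^{e} 2i² k(n−1, e−i). -/
/-- `p(n,e) = Σ_{i=0}^{e} 2 i² k(n−1, e−i)`. -/
def leeP (n e : ℕ) : ℕ := ∑ i ∈ Finset.range (e + 1), 2 * i ^ 2 * leeK (n - 1) (e - i)

lemma leeK_eq_sum (n e N : ℕ) (h : min n e < N) :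
    leeK n e = ∑ i ∈ Finset.range N, 2 ^ i * n.choose i * e.choose i := by
  apply Finset.sum_subset
  · exact Finset.range_subset_range.mpr h
  · intro i hi hni
    simp only [Finset.mem_range, not_lt] at hni
    rcases Nat.lt_or_ge n i with h1 | h1
    · simp [Nat.choose_eq_zero_of_lt h1]
    · have : e < i := by omega
      simp [Nat.choose_eq_zero_of_lt this]

lemma sum_range_three_mul {M : Type*} [AddCommMonoid M] (g : ℕ → M) (N : ℕ) :
    ∑ i ∈ Finset.range (3*N), g i
      = ∑ j ∈ Finset.range N, (g (3*j) + g (3*j+1) + g (3*j+2)) := by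
  induction N with
  | zero => simp
  | succ N ih =>
    have h3 : 3*(N+1) = (3*N + 1) + 1 + 1 := by ring
    rw [h3, Finset.sum_range_succ, Finset.sum_range_succ, Finset.sum_range_succ, ih,
      Finset.sum_range_succ]
    abel

lemma sum_range_three_mul' {M : Type*} [AddCommMonoid M] (g : ℕ → M) (N : ℕ) :
    ∑ i ∈ Finset.range (3*N), g i
      = ∑ j ∈ Finset.range N, ∑ b ∈ Finset.range 3, g (3*j+b) := by
  rw [sum_range_three_mul]
  apply Finset.sum_congr rfl
  intro j _
  rw [Finset.sum_range_succ, Finset.sum_range_succ, Finset.sum_range_one]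
  rfl

instance : Fact (Nat.Prime 3) := ⟨by norm_num⟩

lemma cast_choose_split (m j a b : ℕ) (ha : a < 3) (hb : b < 3) :
    ((Nat.choose (3*m+a) (3*j+b) : ℕ) : ZMod 3)
      = (Nat.choose a b : ZMod 3) * (Nat.choose m j : ZMod 3) := by
  have h := @Choose.choose_modEq_choose_mod_mul_choose_div_nat (3*m+a) (3*j+b) 3 _
  rw [Nat.mul_add_mod, Nat.mul_add_mod, Nat.mul_add_div (by norm_num),
    Nat.mul_add_div (by norm_num), Nat.mod_eq_of_lt ha, Nat.mod_eq_of_lt hb,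
    Nat.div_eq_of_lt ha, Nat.div_eq_of_lt hb, Nat.add_zero, Nat.add_zero] at h
  have := (ZMod.natCast_eq_natCast_iff _ _ 3).mpr h
  push_cast at this ⊢
  exact this

/-- `leeK` mod 3. -/
def KK (n e : ℕ) : ZMod 3 := (leeK n e : ZMod 3)

/-- Partial sums of `leeK` mod 3. -/
def TT (n f : ℕ) : ZMod 3 := ∑ s ∈ Finset.range (f+1), KK n s

lemma two_pow_split (j b : ℕ) : (2 : ZMod 3) ^ (3*j+b) = 2 ^ j * 2 ^ b := by
  rw [pow_add, pow_mul, show (2:ZMod 3)^3 = 2 from by decide]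

lemma term_eq (m f a r j b : ℕ) (ha : a < 3) (hr : r < 3) (hb : b < 3) :
    (2:ZMod 3) ^ (3*j+b) * ((3*m+a).choose (3*j+b) : ZMod 3)
        * ((3*f+r).choose (3*j+b) : ZMod 3)
      = 2 ^ b * (a.choose b : ZMod 3) * (r.choose b : ZMod 3)
        * (2 ^ j * (m.choose j : ZMod 3) * (f.choose j : ZMod 3)) := by
  rw [two_pow_split, cast_choose_split m j a b ha hb, cast_choose_split f j r b hr hb]
  ring

/-- Digit-multiplicativity of the Lee ball cardinality mod 3 (from Lucas). -/
lemma KK_split (m f a r : ℕ) (ha : a < 3) (hr : r < 3) :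
    KK (3*m+a) (3*f+r) = KK a r * KK m f := by
  have hM : min (3*m+a) (3*f+r) < 3 * (min m f + 1) := by omega
  unfold KK
  rw [leeK_eq_sum (3*m+a) (3*f+r) (3*(min m f + 1)) hM,
    leeK_eq_sum a r 3 (by omega), leeK_eq_sum m f (min m f + 1) (by omega)]
  push_cast
  rw [sum_range_three_mul' (fun i => (2:ZMod 3) ^ i * ((3*m+a).choose i : ZMod 3)
        * ((3*f+r).choose i : ZMod 3)), Finset.sum_comm, Finset.sum_mul_sum]
  apply Finset.sum_congr rfl
  intro b hb
  apply Finset.sum_congr rfl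
  intro j _
  exact term_eq m f a r j b ha hr (Finset.mem_range.mp hb)

lemma sum_range_KK (m f : ℕ) :
    ∑ j ∈ Finset.range f, KK m j = TT m f - KK m f := by
  rw [eq_sub_iff_add_eq]
  exact (Finset.sum_range_succ (fun s => KK m s) f).symm

lemma TT_split (m f a r : ℕ) (ha : a < 3) (hr : r < 3) :
    TT (3*m+a) (3*f+r)
      = (KK a 0 + KK a 1 + KK a 2) * (TT m f - KK m f)
        + (∑ c ∈ Finset.range (r+1), KK a c) * KK m f := by
  have key : TT (3*m+a) (3*f+r)
      = ∑ j ∈ Finset.range f, ∑ b ∈ Finset.range 3, KK (3*m+a) (3*j+b)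
        + ∑ c ∈ Finset.range (r+1), KK (3*m+a) (3*f+c) := by
    show (∑ s ∈ Finset.range (3*f+r+1), KK (3*m+a) s) = _
    rw [show 3*f+r+1 = 3*f + (r+1) from by omega, Finset.sum_range_add,
      sum_range_three_mul']
  have h1 : ∀ j ∈ Finset.range f, ∑ b ∈ Finset.range 3, KK (3*m+a) (3*j+b)
      = (KK a 0 + KK a 1 + KK a 2) * KK m j := by
    intro j _
    rw [Finset.sum_range_succ, Finset.sum_range_succ, Finset.sum_range_one,
      KK_split m j a 0 ha (by norm_num), KK_split m j a 1 ha (by norm_num),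
      KK_split m j a 2 ha (by norm_num)]
    ring
  have h3 : ∀ c ∈ Finset.range (r+1), KK (3*m+a) (3*f+c) = KK a c * KK m f := by
    intro c hc
    have hc3 : c < 3 := by have := Finset.mem_range.mp hc; omega
    exact KK_split m f a c ha hc3
  rw [key, Finset.sum_congr rfl h1, Finset.sum_congr rfl h3, ← Finset.mul_sum,
    ← Finset.sum_mul, sum_range_KK]

/-- The key induction: if all base-3 digits of `f` avoid `1`, then mod 3 the
Lee ball cardinality is nonzero and the partial sum is `0` or equal to it. -/
lemma key_induction (f : ℕ) (hf : ∀ j, f / 3^j % 3 ≠ 1) :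
    ∀ n, KK n f ≠ 0 ∧ (TT n f = 0 ∨ TT n f = KK n f) := by
  induction f using Nat.strong_induction_on with
  | _ f IH =>
    intro n
    rcases Nat.eq_zero_or_pos f with hf0 | hfpos
    · subst hf0
      have hK : KK n 0 = 1 := by
        unfold KK
        rw [show leeK n 0 = 1 from by simp [leeK]]
        norm_num
      refine ⟨by rw [hK]; decide, Or.inr ?_⟩
      show (∑ s ∈ Finset.range 1, KK n s) = KK n 0
      rw [Finset.sum_range_one]
    · -- decompose f and n into base-3 parts
      set r := f % 3 with hrdef
      set f' := f / 3 with hf'def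
      have hfe : f = 3*f' + r := by omega
      have hr3 : r < 3 := Nat.mod_lt _ (by norm_num)
      have hr1 : r ≠ 1 := by simpa using hf 0
      have hlt : f' < f := Nat.div_lt_self hfpos (by norm_num)
      have hf'd : ∀ j, f' / 3^j % 3 ≠ 1 := by
        intro j
        have heq : f' / 3^j = f / 3^(j+1) := by
          rw [hf'def, Nat.div_div_eq_div_mul, ← pow_succ']
        rw [heq]
        exact hf (j+1)
      set a := n % 3 with hadef
      set m := n / 3 with hmdef
      have hne : n = 3*m + a := by omega
      have ha3 : a < 3 := Nat.mod_lt _ (by norm_num)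
      obtain ⟨hK', hT'⟩ := IH f' hlt hf'd m
      have hKs : KK n f = KK a r * KK m f' := by
        rw [hne, hfe]; exact KK_split m f' a r ha3 hr3
      have hTs : TT n f = (KK a 0 + KK a 1 + KK a 2) * (TT m f' - KK m f')
          + (∑ c ∈ Finset.range (r+1), KK a c) * KK m f' := by
        rw [hne, hfe]; exact TT_split m f' a r ha3 hr3
      have hrc : r = 0 ∨ r = 2 := by omega
      have hac : a = 0 ∨ a = 1 ∨ a = 2 := by omega
      constructor
      · rw [hKs]
        apply mul_ne_zero _ hK'
        rcases hac with h | h | h <;> rcases hrc with h' | h' <;>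
          rw [h, h'] <;> decide
      · rcases hac with h | h | h <;> rcases hrc with h' | h' <;>
          rw [hTs, hKs, h, h']
        · -- a = 0, r = 0
          right
          rw [Finset.sum_range_one,
            show KK 0 0 + KK 0 1 + KK 0 2 = 0 from by decide,
            show KK 0 0 = 1 from by decide]
          ring
        · -- a = 0, r = 2
          left
          rw [Finset.sum_range_succ, Finset.sum_range_succ, Finset.sum_range_one,
            show KK 0 0 + KK 0 1 + KK 0 2 = 0 from by decide]
          ring
        · -- a = 1, r = 0
          right
          rw [Finset.sum_range_one,
            show KK 1 0 + KK 1 1 + KK 1 2 = 0 from by decide,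
            show KK 1 0 = 1 from by decide]
          ring
        · -- a = 1, r = 2
          left
          rw [Finset.sum_range_succ, Finset.sum_range_succ, Finset.sum_range_one,
            show KK 1 0 + KK 1 1 + KK 1 2 = 0 from by decide]
          ring
        · -- a = 2, r = 0
          rw [Finset.sum_range_one,
            show KK 2 0 + KK 2 1 + KK 2 2 = 1 from by decide,
            show KK 2 0 = 1 from by decide]
          rcases hT' with h2 | h2
          · left; rw [h2]; ring
          · right; rw [h2]; ring
        · -- a = 2, r = 2
          rw [Finset.sum_range_succ, Finset.sum_range_succ, Finset.sum_range_one,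
            show KK 2 0 + KK 2 1 + KK 2 2 = 1 from by decide,
            show KK 2 2 = 1 from by decide]
          rcases hT' with h2 | h2
          · left; rw [h2]; ring
          · right; rw [h2]; ring

theorem leeP_not_dvd_three (e : ℕ) (he : 0 < e) (h0 : e % 3 = 1)
    (hrest : ∀ j, 1 ≤ j → (e / 3 ^ j) % 3 ≠ 1) :
    ∀ n : ℕ, 0 < n → ¬ (3 ∣ leeP n e) := by
  intro n hn hdvd
  set f := e / 3 with hfdef
  have hef : e = 3*f + 1 := by omega
  have hfd : ∀ j, f / 3^j % 3 ≠ 1 := by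
    intro j
    have heq : f / 3^j = e / 3^(j+1) := by
      rw [hfdef, Nat.div_div_eq_div_mul, ← pow_succ']
    rw [heq]
    exact hrest (j+1) (by omega)
  set a := (n-1) % 3 with hadef
  set m := (n-1) / 3 with hmdef
  have hne : n - 1 = 3*m + a := by omega
  have ha3 : a < 3 := Nat.mod_lt _ (by norm_num)
  obtain ⟨hK', hT'⟩ := key_induction f hfd m
  -- cast leeP to ZMod 3
  have hzero : ((leeP n e : ℕ) : ZMod 3) = 0 := by
    rw [ZMod.natCast_eq_zero_iff]
    exact hdvd
  -- rewrite the sum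
  have hcast : ((leeP n e : ℕ) : ZMod 3)
      = ∑ i ∈ Finset.range (e+1), 2 * ((i:ℕ) : ZMod 3)^2 * KK (n-1) (e-i) := by
    unfold leeP KK
    push_cast
    rfl
  have he1 : ((e:ℕ) : ZMod 3) = 1 := by
    rw [hef]
    push_cast
    rw [show ((3:ZMod 3)) = 0 from by decide]
    ring
  -- reflect the sum : i ↦ e - i
  have hrefl : ((leeP n e : ℕ) : ZMod 3)
      = ∑ s ∈ Finset.range (e+1), 2 * (1 - (s : ZMod 3))^2 * KK (n-1) s := by
    rw [hcast, ← Finset.sum_range_reflect]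
    apply Finset.sum_congr rfl
    intro s hs
    have hse : s ≤ e := by have := Finset.mem_range.mp hs; omega
    have h1 : e + 1 - 1 - s = e - s := by omega
    have h2 : e - (e - s) = s := by omega
    rw [h1, h2, Nat.cast_sub hse, he1]
  -- per-term evaluation on base-3 digits
  have hterm : ∀ t b, b < 3 →
      2 * (1 - ((3*t+b : ℕ) : ZMod 3))^2 * KK (n-1) (3*t+b)
        = (2 * (1 - (b : ZMod 3))^2 * KK a b) * KK m t := by
    intro t b hb
    rw [hne, KK_split m t a b ha3 hb]
    push_cast
    rw [show ((3:ZMod 3)) = 0 from by decide]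
    ring
  -- split the sum according to base-3 digits
  have hsum : ((leeP n e : ℕ) : ZMod 3)
      = (2 * KK a 0 + 2 * KK a 2) * (TT m f - KK m f) + 2 * KK a 0 * KK m f := by
    rw [hrefl, show e+1 = 3*f + 2 from by omega, Finset.sum_range_add,
      sum_range_three_mul' (fun s => 2 * (1 - (s : ZMod 3))^2 * KK (n-1) s) f]
    have hinner : ∀ t ∈ Finset.range f,
        (∑ b ∈ Finset.range 3, 2 * (1 - ((3*t+b : ℕ) : ZMod 3))^2 * KK (n-1) (3*t+b))
          = (2 * KK a 0 + 2 * KK a 2) * KK m t := by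
      intro t _
      rw [Finset.sum_range_succ, Finset.sum_range_succ, Finset.sum_range_one,
        hterm t 0 (by norm_num), hterm t 1 (by norm_num), hterm t 2 (by norm_num)]
      push_cast
      ring
    have htail : (∑ x ∈ Finset.range 2,
        2 * (1 - ((3*f+x : ℕ) : ZMod 3))^2 * KK (n-1) (3*f+x)) = 2 * KK a 0 * KK m f := by
      rw [Finset.sum_range_succ, Finset.sum_range_one,
        hterm f 0 (by norm_num), hterm f 1 (by norm_num)]
      push_cast
      ring
    rw [Finset.sum_congr rfl hinner, htail, ← Finset.mul_sum, sum_range_KK]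
  have heq : (0 : ZMod 3)
      = (2 * KK a 0 + 2 * KK a 2) * (TT m f - KK m f) + 2 * KK a 0 * KK m f := by
    rw [← hsum, hzero]
  have h3 : (3 : ZMod 3) = 0 := by decide
  apply hK'
  have hac : a = 0 ∨ a = 1 ∨ a = 2 := by omega
  rcases hac with h | h | h <;> rw [h] at heq
  · rw [show KK 0 0 = 1 from by decide, show KK 0 2 = 1 from by decide] at heq
    rcases hT' with h2 | h2 <;> rw [h2] at heq
    · linear_combination (-1 : ZMod 3)*heq + KK m f * h3
    · linear_combination heq + KK m f * h3
  · rw [show KK 1 0 = 1 from by decide, show KK 1 2 = 2 from by decide] at heq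
    linear_combination heq + (2*TT m f - KK m f) * h3
  · rw [show KK 2 0 = 1 from by decide, show KK 2 2 = 1 from by decide] at heq
    rcases hT' with h2 | h2 <;> rw [h2] at heq
    · linear_combination (-1 : ZMod 3)*heq + KK m f * h3
    · linear_combination heq + KK m f * h3
end

section
/- Let m ≥ 0, and let n, e, h, a be positive integers with 3^{m+1} ≤ n < 2·3^{m+1}, e < 3^h, and h ≥ m+2. Then k(3^{h+1}a + n, e) ≡ k(n,e) (mod 9). -/
lemma nine_dvd_choose (h j : ℕ) (hj : 0 < j) (hjh : j < 3 ^ h) :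
    9 ∣ (3 ^ (h + 1)).choose j := by
  have p3 : Nat.Prime 3 := by norm_num
  set t := j.factorization 3 with ht
  have hdvd : 3 ^ t ∣ j := Nat.ordProj_dvd j 3
  have hth : t < h := by
    by_contra hc
    push_neg at hc
    have : 3 ^ h ≤ 3 ^ t := Nat.pow_le_pow_right (by norm_num) hc
    have : 3 ^ t ≤ j := Nat.le_of_dvd hj hdvd
    omega
  have key : 3 ^ (h + 1) ∣ (3 ^ (h + 1)).choose j * j := by
    obtain ⟨j', rfl⟩ : ∃ j', j = j' + 1 := ⟨j - 1, by omega⟩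
    have h1 : (0:ℕ) < 3 ^ (h + 1) := by positivity
    have := Nat.add_one_mul_choose_eq (3 ^ (h + 1) - 1) j'
    rw [Nat.sub_add_cancel h1] at this
    exact ⟨(3 ^ (h + 1) - 1).choose j', this.symm⟩
  set u := ordCompl[3] j with hu
  have hju : j = 3 ^ t * u := (Nat.ordProj_mul_ordCompl_eq_self j 3).symm
  have hcop : Nat.Coprime 3 u := Nat.coprime_ordCompl p3 hj.ne'
  have key2 : 3 ^ (h + 1 - t) ∣ (3 ^ (h + 1)).choose j * u := by
    have : 3 ^ (h + 1 - t) * 3 ^ t ∣ ((3 ^ (h + 1)).choose j * u) * 3 ^ t := by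
      rw [← pow_add]
      have : h + 1 - t + t = h + 1 := by omega
      rw [this]
      have e2 : (3 ^ (h + 1)).choose j * j = (3 ^ (h + 1)).choose j * u * 3 ^ t := by
        rw [hju]; ring
      exact e2 ▸ key
    exact (mul_dvd_mul_iff_right (by positivity : (3:ℕ)^t ≠ 0)).mp this
  have key3 : 3 ^ (h + 1 - t) ∣ (3 ^ (h + 1)).choose j :=
    (Nat.Coprime.dvd_of_dvd_mul_right ((hcop.pow_left _)) key2)
  calc (9:ℕ) = 3 ^ 2 := by norm_num
    _ ∣ 3 ^ (h + 1 - t) := pow_dvd_pow 3 (by omega)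
    _ ∣ _ := key3

lemma choose_cast_eq (h n i : ℕ) (hi : i < 3 ^ h) :
    (((3 ^ (h + 1) + n).choose i : ℕ) : ZMod 9) = (n.choose i : ZMod 9) := by
  rw [Nat.add_choose_eq]
  push_cast
  rw [Finset.sum_eq_single (0, i)]
  · simp
  · rintro ⟨a, b⟩ hab hne
    rw [Finset.HasAntidiagonal.mem_antidiagonal] at hab
    have ha : 0 < a := by
      rcases Nat.eq_zero_or_pos a with h0 | h0
      · exfalso; apply hne; simp [h0, ← hab, h0]
      · exact h0
    have : ((((3:ℕ) ^ (h + 1)).choose a : ℕ) : ZMod 9) = 0 := by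
      obtain ⟨c, hc⟩ := nine_dvd_choose h a ha (by omega)
      rw [hc]
      push_cast
      rw [show (9:ZMod 9) = 0 by rfl, zero_mul]
    rw [this, zero_mul]
  · intro hmem
    exact absurd (by simp [Finset.HasAntidiagonal.mem_antidiagonal]) hmem

lemma choose_cast_eq' (h a n i : ℕ) (hi : i < 3 ^ h) :
    (((3 ^ (h + 1) * a + n).choose i : ℕ) : ZMod 9) = (n.choose i : ZMod 9) := by
  induction a with
  | zero => simp
  | succ a ih =>
    have : 3 ^ (h + 1) * (a + 1) + n = 3 ^ (h + 1) + (3 ^ (h + 1) * a + n) := by ring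
    rw [this, choose_cast_eq h _ i hi, ih]

lemma leeK_eq (n e : ℕ) :
    leeK n e = ∑ i ∈ Finset.range (e + 1), 2 ^ i * n.choose i * e.choose i := by
  unfold leeK
  apply Finset.sum_subset
  · intro x hx
    simp only [Finset.mem_range] at hx ⊢
    omega
  · intro x hx hx'
    simp only [Finset.mem_range] at hx hx'
    have : n < x := by omega
    simp [Nat.choose_eq_zero_of_lt this]

theorem leeK_periodicity_mod_nine (m n e h a : ℕ) (hn : 0 < n) (he : 0 < e)
    (hh0 : 0 < h) (ha : 0 < a) (hn1 : 3 ^ (m + 1) ≤ n) (hn2 : n < 2 * 3 ^ (m + 1))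
    (helt : e < 3 ^ h) (hh : m + 2 ≤ h) :
    leeK (3 ^ (h + 1) * a + n) e ≡ leeK n e [MOD 9] := by
  rw [← ZMod.natCast_eq_natCast_iff]
  rw [leeK_eq, leeK_eq]
  push_cast
  apply Finset.sum_congr rfl
  intro i hi
  rw [Finset.mem_range] at hi
  rw [choose_cast_eq' h a n i (by omega)]
end
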